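/- In a free group, if a nontrivial element a normalizes a cyclic subgroup generated by c in the sense a c^k a⁻¹ ∈ ⟨c⟩ for some k ≠ 0, then a commutes with c (equivalently a ∈ the centralizer of c, which is the maximal cyclic subgroup containing c). -/

import Mathlib

namespace FGCommAux

open FreeGroup List

variable {α : Type*}

/-- flip a letter -/
def flipP (p : α × Bool) : α × Bool := (p.1, !p.2)

@[simp] lemma flipP_flipP (p : α × Bool) : flipP (flipP p) = p := by simp [flipP]

/-- the "no cancellation" relation between adjacent letters -/
def R (p q : α × Bool) : Prop := q ≠ (p.1, !p.2)

lemma R_iff {p q : α × Bool} : R p q ↔ q ≠ flipP p := Iff.rfl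

/-- a word is reduced -/
def IsRed (L : List (α × Bool)) : Prop := List.Chain' R L

/-- a word is cyclically reduced -/
def CycRed (L : List (α × Bool)) : Prop := IsRed (L ++ L)

lemma IsRed.infix {L M : List (α × Bool)} (h : IsRed L) (h' : M <:+: L) : IsRed M :=
  List.IsChain.infix h h'

lemma CycRed.isRed {L : List (α × Bool)} (h : CycRed L) : IsRed L :=
  h.infix ⟨[], L, by simp⟩

lemma reduce_eq_self [DecidableEq α] {L : List (α × Bool)} (h : IsRed L) : reduce L = L := by
  induction L with
  | nil => rfl
  | cons x L ih =>
    have hL : IsRed L := (List.isChain_cons.1 h).2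
    rw [reduce.cons, ih hL]
    cases L with
    | nil => rfl
    | cons y M =>
      have hxy : R x y := (List.isChain_cons_cons.1 h).1
      have : ¬ (x.1 = y.1 ∧ x.2 = !y.2) := by
        rintro ⟨h1, h2⟩
        exact hxy (by ext <;> simp [h1, h2])
      simp only [this, if_false]

lemma exists_decomp {M : List (α × Bool)} (h : ¬ IsRed M) :
    ∃ (L₂ : List (α × Bool)) (x : α) (b : Bool) (L₃ : List (α × Bool)),
      M = L₂ ++ (x, b) :: (x, !b) :: L₃ := by
  induction M with
  | nil => exact absurd List.isChain_nil h
  | cons p M ih =>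
    by_cases hM : IsRed M
    · cases M with
      | nil => exact absurd (List.isChain_singleton p) h
      | cons q M' =>
        have : ¬ R p q := by
          intro hpq
          exact h (List.isChain_cons_cons.2 ⟨hpq, hM⟩)
        simp only [R, not_not] at this
        exact ⟨[], p.1, p.2, M', by simp [this]⟩
    · obtain ⟨L₂, x, b, L₃, hd⟩ := ih hM
      exact ⟨p :: L₂, x, b, L₃, by simp [hd]⟩

lemma isRed_reduce [DecidableEq α] (L : List (α × Bool)) : IsRed (reduce L) := by
  by_contra h
  obtain ⟨L₂, x, b, L₃, hd⟩ := exists_decomp h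
  exact reduce.not hd

lemma isRed_toWord [DecidableEq α] (x : FreeGroup α) : IsRed x.toWord := by
  rw [← FreeGroup.reduce_toWord]
  exact isRed_reduce _

lemma toWord_mk_isRed [DecidableEq α] {L : List (α × Bool)} (h : IsRed L) :
    (FreeGroup.mk L).toWord = L := by
  rw [FreeGroup.toWord_mk, reduce_eq_self h]

/-- n-fold concatenation -/
def pw (L : List (α × Bool)) : ℕ → List (α × Bool)
  | 0 => []
  | n + 1 => L ++ pw L n

@[simp] lemma pw_zero (L : List (α × Bool)) : pw L 0 = [] := rfl
lemma pw_succ (L : List (α × Bool)) (n : ℕ) : pw L (n + 1) = L ++ pw L n := rfl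

lemma pw_add (L : List (α × Bool)) (m n : ℕ) : pw L (m + n) = pw L m ++ pw L n := by
  induction m with
  | zero => simp
  | succ m ih => rw [Nat.succ_add, pw_succ, pw_succ, ih, List.append_assoc]

@[simp] lemma length_pw (L : List (α × Bool)) (n : ℕ) : (pw L n).length = n * L.length := by
  induction n with
  | zero => simp
  | succ n ih => rw [pw_succ]; simp [ih]; ring

lemma mk_pw (L : List (α × Bool)) (n : ℕ) : FreeGroup.mk (pw L n) = (FreeGroup.mk L) ^ n := by
  induction n with
  | zero => simp [pw, FreeGroup.one_eq_mk]
  | succ n ih => rw [pw_succ, ← FreeGroup.mul_mk, ih, pow_succ']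

@[simp] lemma pw_nil (n : ℕ) : pw ([] : List (α × Bool)) n = [] := by
  induction n with
  | zero => rfl
  | succ n ih => rw [pw_succ, ih]; rfl

lemma pw_one (L : List (α × Bool)) : pw L 1 = L := by rw [pw_succ]; simp

lemma pw_succ' (L : List (α × Bool)) (n : ℕ) : pw L (n + 1) = pw L n ++ L := by
  rw [pw_add, pw_one]

lemma head?_pw (L : List (α × Bool)) {n : ℕ} (hn : 1 ≤ n) : (pw L n).head? = L.head? := by
  cases n with
  | zero => omega
  | succ n =>
    rw [pw_succ]
    cases L with
    | nil => simp
    | cons p M => rfl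

lemma getLast?_pw (L : List (α × Bool)) {n : ℕ} (hn : 1 ≤ n) :
    (pw L n).getLast? = L.getLast? := by
  cases n with
  | zero => omega
  | succ n =>
    rw [pw_succ']
    cases L with
    | nil => simp
    | cons p M => rw [List.getLast?_append_of_ne_nil _ (by simp)]

lemma isRed_append_pw {L : List (α × Bool)} (h : CycRed L) (n : ℕ) : IsRed (L ++ pw L n) := by
  induction n with
  | zero => simpa using h.isRed
  | succ n ih =>
    rw [pw_succ]
    rcases List.isChain_append.1 h with ⟨h1, -, hj⟩
    refine List.isChain_append.2 ⟨h1, ih, ?_⟩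
    intro p hp q hq
    refine hj p hp q ?_
    cases L with
    | nil => simp at hp
    | cons x M => simpa using hq

lemma isRed_pw {L : List (α × Bool)} (h : CycRed L) (n : ℕ) : IsRed (pw L n) := by
  cases n with
  | zero => exact List.isChain_nil
  | succ n => rw [pw_succ]; exact isRed_append_pw h n

lemma cycRed_pw {L : List (α × Bool)} (h : CycRed L) (n : ℕ) : CycRed (pw L n) := by
  unfold CycRed
  rw [← pw_add]
  exact isRed_pw h _

-- invRev lemmas
lemma invRev_eq (L : List (α × Bool)) : invRev L = (L.map flipP).reverse := rfl

lemma invRev_append (A B : List (α × Bool)) :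
    invRev (A ++ B) = invRev B ++ invRev A := by
  simp [invRev_eq]

lemma invRev_singleton (p : α × Bool) : invRev [p] = [flipP p] := rfl

lemma invRev_cons (p : α × Bool) (L : List (α × Bool)) :
    invRev (p :: L) = invRev L ++ [flipP p] := by
  simp [invRev_eq]

lemma R_flipP {p q : α × Bool} (h : R p q) : R (flipP q) (flipP p) := by
  simp only [R, flipP, Bool.not_not, ne_eq] at h ⊢
  intro hc
  exact h (by rw [← Prod.mk.eta (p := q), ← hc])

lemma IsRed.invRev {L : List (α × Bool)} (h : IsRed L) : IsRed (FreeGroup.invRev L) := by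
  rw [invRev_eq]
  rw [IsRed, List.Chain', List.isChain_reverse, List.isChain_map]
  exact h.imp fun _ _ hpq => R_flipP hpq

lemma CycRed.invRev {L : List (α × Bool)} (h : CycRed L) : CycRed (FreeGroup.invRev L) := by
  unfold CycRed
  rw [← invRev_append]
  exact IsRed.invRev h

@[simp] lemma head?_invRev (L : List (α × Bool)) :
    (invRev L).head? = L.getLast?.map flipP := by
  simp [invRev_eq, List.head?_reverse]

@[simp] lemma getLast?_invRev (L : List (α × Bool)) :
    (invRev L).getLast? = L.head?.map flipP := by
  simp [invRev_eq, List.getLast?_reverse]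

/-- rotation relation -/
def Rot (L L' : List (α × Bool)) : Prop := ∃ A B, L = A ++ B ∧ L' = B ++ A

lemma Rot.refl (L : List (α × Bool)) : Rot L L := ⟨L, [], by simp, by simp⟩

lemma rot_iff {L L' : List (α × Bool)} : Rot L L' ↔ ∃ n, L' = L.rotate n := by
  constructor
  · rintro ⟨A, B, rfl, rfl⟩
    exact ⟨A.length, (List.rotate_append_length_eq A B).symm⟩
  · rintro ⟨n, rfl⟩
    rcases List.eq_nil_or_concat L with rfl | hne
    · exact ⟨[], [], by simp, by simp⟩
    have h : 0 < L.length := by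
      obtain ⟨a, b, rfl⟩ := hne; simp
    refine ⟨L.take (n % L.length), L.drop (n % L.length), (List.take_append_drop _ _).symm, ?_⟩
    rw [← List.rotate_mod, List.rotate_eq_drop_append_take (Nat.mod_lt _ h).le]

lemma Rot.trans {L L' L'' : List (α × Bool)} (h1 : Rot L L') (h2 : Rot L' L'') : Rot L L'' := by
  rw [rot_iff] at *
  obtain ⟨n, rfl⟩ := h1
  obtain ⟨m, rfl⟩ := h2
  exact ⟨n + m, (List.rotate_rotate _ _ _)⟩

lemma Rot.length {L L' : List (α × Bool)} (h : Rot L L') : L.length = L'.length := by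
  obtain ⟨A, B, rfl, rfl⟩ := h
  simp [Nat.add_comm]

lemma Rot.cycRed {L L' : List (α × Bool)} (h : Rot L L') (hL : CycRed L) : CycRed L' := by
  obtain ⟨A, B, rfl, rfl⟩ := h
  have h3 : IsRed (pw (A ++ B) 3) := isRed_pw hL 3
  refine h3.infix ⟨A, B, ?_⟩
  show A ++ ((B ++ A) ++ (B ++ A)) ++ B = pw (A ++ B) 3
  simp [pw, pw_succ, List.append_assoc]

lemma eq_nil_of_invRev_eq {L : List (α × Bool)} (h : IsRed L) (he : invRev L = L) :
    L = [] := by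
  by_contra hne
  have hlen : 1 ≤ L.length := by
    cases L with
    | nil => exact absurd rfl hne
    | cons p M => simp
  have key : ∀ i j : ℕ, i + j + 1 = L.length → L[i]? = L[j]?.map flipP := by
    intro i j hij
    conv_lhs => rw [← he]
    rw [invRev_eq, List.getElem?_reverse (by simp; omega), List.getElem?_map]
    have : (L.map flipP).length - 1 - i = j := by simp; omega
    rw [this]
  have key2 : ∀ i j (hi : i < L.length) (hj : j < L.length), i + j + 1 = L.length →
      L[i] = flipP L[j] := by
    intro i j hi hj hij
    have := key i j hij
    rw [List.getElem?_eq_getElem hi, List.getElem?_eq_getElem hj] at this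
    simpa using this
  rcases Nat.even_or_odd L.length with he2 | ho
  · -- even length
    obtain ⟨m, hm⟩ := he2
    have hm1 : 1 ≤ m := by omega
    obtain ⟨m', rfl⟩ := Nat.exists_eq_add_of_le hm1
    have hkey := key2 (m' + 1) m' (by omega) (by omega) (by omega)
    have hchain := List.isChain_iff_getElem.1 h m' (by omega)
    exact hchain (by rw [hkey]; rfl)
  · -- odd length
    obtain ⟨m, hm⟩ := ho
    have hkey := key2 m m (by omega) (by omega) (by omega)
    have := congrArg Prod.snd hkey
    simp [flipP] at this

lemma nil_of_cycRed_sandwich {U W : List (α × Bool)}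
    (h : CycRed (U ++ W ++ invRev U)) : U = [] := by
  by_contra hne
  have hinv : invRev U ≠ [] := by
    cases U with
    | nil => exact absurd rfl hne
    | cons p M => simp [invRev_eq]
  set X := U ++ W ++ invRev U with hX
  have hj := (List.isChain_append.1 h).2.2
  have hlast : X.getLast? = U.head?.map flipP := by
    rw [hX, List.append_assoc, List.getLast?_append_of_ne_nil _ (by simp [hinv]),
      List.getLast?_append_of_ne_nil _ hinv, getLast?_invRev]
  have hhead : X.head? = U.head? := by
    rw [hX, List.append_assoc, List.head?_append_of_ne_nil _ hne]
  cases hU : U.head? with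
  | none => cases U with
    | nil => exact absurd rfl hne
    | cons p M => simp at hU
  | some u₀ =>
    have := hj (flipP u₀) (by rw [hlast, hU]; rfl) u₀ (by simp [hhead, hU])
    simp [R, flipP] at this

lemma isRed_sandwich_pw {U D : List (α × Bool)}
    (hred : IsRed (U ++ D ++ invRev U)) (hD : CycRed D) {n : ℕ} (hn : 1 ≤ n) :
    IsRed (U ++ pw D n ++ invRev U) := by
  rw [List.append_assoc] at hred ⊢
  obtain ⟨h1, h2, hj⟩ := List.isChain_append.1 hred
  obtain ⟨h3, h4, hj2⟩ := List.isChain_append.1 h2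
  refine List.isChain_append.2 ⟨h1, List.isChain_append.2 ⟨isRed_pw hD n, h4, ?_⟩, ?_⟩
  · intro p hp q hq
    exact hj2 p (by rwa [getLast?_pw _ hn] at hp) q hq
  · intro p hp q hq
    refine hj p hp q ?_
    by_cases hDn : D = []
    · subst hDn
      rwa [pw_nil, List.nil_append] at hq
    · have hpwne : pw D n ≠ [] := by
        intro hc
        have hlen2 := congrArg List.length hc
        rw [length_pw] at hlen2
        simp at hlen2
        rcases hlen2 with h' | h'
        · omega
        · exact hDn h'
      rw [List.head?_append_of_ne_nil _ hpwne, head?_pw _ hn] at hq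
      rw [List.head?_append_of_ne_nil _ hDn]
      exact hq

lemma mk_inv_singleton (p : α × Bool) : (FreeGroup.mk [p])⁻¹ = FreeGroup.mk [flipP p] := by
  rw [FreeGroup.inv_mk, invRev_singleton]

lemma mk_cancel (p : α × Bool) : FreeGroup.mk [p] * FreeGroup.mk [flipP p] = 1 := by
  rw [← mk_inv_singleton, mul_inv_cancel]

lemma flipP_ne_self (p : α × Bool) : flipP p ≠ p := by
  simp [flipP, Prod.ext_iff]

lemma cycRed_nil : CycRed ([] : List (α × Bool)) := by
  unfold CycRed IsRed
  simp
  exact List.isChain_nil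

/-- cyclically reduced decomposition -/
lemma cycDecomp_aux [DecidableEq α] :
    ∀ n (x : FreeGroup α), x.toWord.length ≤ n →
    ∃ (u : FreeGroup α) (D : List (α × Bool)), CycRed D ∧
      x = u * FreeGroup.mk D * u⁻¹ ∧
      x.toWord = u.toWord ++ D ++ invRev u.toWord := by
  intro n
  induction n with
  | zero =>
    intro x hx
    have hL : x.toWord = [] := List.length_eq_zero_iff.1 (Nat.le_zero.1 hx)
    refine ⟨1, [], cycRed_nil, ?_, ?_⟩
    · rw [← FreeGroup.mk_toWord (x := x), hL]
      simp [FreeGroup.one_eq_mk]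
    · simp [hL, FreeGroup.toWord_one, FreeGroup.invRev_empty]
  | succ n ih =>
    intro x hx
    by_cases hcyc : CycRed x.toWord
    · refine ⟨1, x.toWord, hcyc, ?_, ?_⟩
      · simp [FreeGroup.mk_toWord]
      · simp [FreeGroup.toWord_one, FreeGroup.invRev_empty]
    · have hL : IsRed x.toWord := isRed_toWord x
      have hjf : ∃ p ∈ x.toWord.getLast?, ∃ q ∈ x.toWord.head?, ¬ R p q := by
        by_contra hno
        push_neg at hno
        exact hcyc (List.isChain_append.2 ⟨hL, hL, hno⟩)
      obtain ⟨p, hp, q, hq, hpq⟩ := hjf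
      have hq2 : q = flipP p := by simpa [R_iff] using hpq
      obtain ⟨L₁, hW⟩ : ∃ L₁, x.toWord = q :: L₁ := ⟨_, List.eq_cons_of_mem_head? hq⟩
      rcases L₁ with _ | ⟨r, L₂⟩
      · exfalso
        rw [hW] at hp
        simp at hp
        rw [hp] at hq2
        exact flipP_ne_self p hq2.symm
      · have hL₁ne : (r :: L₂ : List (α × Bool)) ≠ [] := by simp
        have hpl : (r :: L₂).getLast hL₁ne = p := by
          rw [hW, List.getLast?_cons_cons, List.getLast?_eq_getLast hL₁ne] at hp
          simpa using hp
        obtain ⟨M, hMsp⟩ : ∃ M, (r :: L₂ : List (α × Bool)) = M ++ [p] :=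
          ⟨(r :: L₂).dropLast, by rw [← hpl]; exact (List.dropLast_append_getLast hL₁ne).symm⟩
        have hsplit : x.toWord = q :: (M ++ [p]) := by rw [hW, hMsp]
        have hMred : IsRed M := by
          refine hL.infix ⟨[q], [p], ?_⟩
          rw [hsplit]; simp
        have hMlen : M.length ≤ n := by
          have h1 := hx
          rw [hsplit] at h1
          simp at h1
          omega
        have hMword : (FreeGroup.mk M).toWord = M := toWord_mk_isRed hMred
        obtain ⟨u', D, hDcyc, hyeq, hyword⟩ := ih (FreeGroup.mk M) (by rw [hMword]; exact hMlen)
        rw [hMword] at hyword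
        obtain ⟨W', hW'⟩ : ∃ W', (u' : FreeGroup α).toWord = W' := ⟨_, rfl⟩
        rw [hW'] at hyword
        have hredW' : IsRed W' := by rw [← hW']; exact isRed_toWord u'
        have hp2 : p = flipP q := by rw [hq2]; simp
        refine ⟨FreeGroup.mk (q :: W'), D, hDcyc, ?_, ?_⟩
        · have hx1 : x = FreeGroup.mk [q] * FreeGroup.mk M * FreeGroup.mk [p] := by
            rw [← FreeGroup.mk_toWord (x := x), hsplit]
            have hls : q :: (M ++ [p]) = ([q] ++ M) ++ [p] := by simp
            rw [hls, ← FreeGroup.mul_mk, ← FreeGroup.mul_mk]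
          have hx2 : FreeGroup.mk [p] = (FreeGroup.mk [q])⁻¹ := by
            rw [hp2, mk_inv_singleton]
          have hqw : FreeGroup.mk (q :: W') = FreeGroup.mk [q] * u' := by
            have hls : (q :: W' : List (α × Bool)) = [q] ++ W' := rfl
            rw [hls, ← FreeGroup.mul_mk, ← hW', FreeGroup.mk_toWord]
          rw [hx1, hx2, hyeq, hqw]
          group
        · have hqwred : IsRed (q :: W') := by
            rcases W' with _ | ⟨w₀, W₁⟩
            · exact List.isChain_singleton q
            · refine List.isChain_cons_cons.2 ⟨?_, hredW'⟩
              have hth := hL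
              rw [hsplit, hyword] at hth
              simp only [List.cons_append, List.append_assoc] at hth
              exact (List.isChain_cons_cons.1 hth).1
          rw [toWord_mk_isRed hqwred, hsplit, hyword, invRev_cons, ← hp2]
          simp [List.append_assoc]

lemma cycDecomp [DecidableEq α] (x : FreeGroup α) :
    ∃ (u : FreeGroup α) (D : List (α × Bool)), CycRed D ∧
      x = u * FreeGroup.mk D * u⁻¹ ∧
      x.toWord = u.toWord ++ D ++ invRev u.toWord :=
  cycDecomp_aux x.toWord.length x le_rfl

lemma mk_cons (p : α × Bool) (L : List (α × Bool)) :
    FreeGroup.mk (p :: L) = FreeGroup.mk [p] * FreeGroup.mk L := by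
  rw [FreeGroup.mul_mk]; rfl

lemma mk_sandwich (u d : List (α × Bool)) :
    FreeGroup.mk u * FreeGroup.mk d * (FreeGroup.mk u)⁻¹ =
      FreeGroup.mk (u ++ d ++ invRev u) := by
  rw [FreeGroup.inv_mk, FreeGroup.mul_mk, FreeGroup.mul_mk]

/-- conjugation normal form -/
lemma conjForm :
    ∀ (W : List (α × Bool)), IsRed W → ∀ (D : List (α × Bool)), CycRed D →
    ∃ U D', Rot D D' ∧ CycRed D' ∧ IsRed (U ++ D' ++ invRev U) ∧
      FreeGroup.mk W * FreeGroup.mk D * (FreeGroup.mk W)⁻¹ =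
        FreeGroup.mk (U ++ D' ++ invRev U) := by
  intro W
  induction W with
  | nil =>
    intro _ D hD
    refine ⟨[], D, Rot.refl D, hD, by simpa using hD.isRed, ?_⟩
    rw [← mk_sandwich]
  | cons p W' ih =>
    intro hW D hD
    have hW' : IsRed W' := (List.isChain_cons.1 hW).2
    obtain ⟨U, D', hrot, hcyc, hred, heq⟩ := ih hW' D hD
    have hexpr : FreeGroup.mk (p :: W') * FreeGroup.mk D * (FreeGroup.mk (p :: W'))⁻¹ =
        FreeGroup.mk [p] * (FreeGroup.mk U * FreeGroup.mk D' * (FreeGroup.mk U)⁻¹) *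
          (FreeGroup.mk [p])⁻¹ := by
      rw [mk_cons, mk_sandwich, ← heq]
      group
    rcases U with _ | ⟨u₀, U₁⟩
    · -- U = []
      rcases hD'c : D' with _ | ⟨d₀, T⟩
      · -- D' = []
        subst hD'c
        refine ⟨[], [], hrot, cycRed_nil, by simpa using cycRed_nil.isRed, ?_⟩
        rw [hexpr, ← mk_sandwich]
        simp only [← FreeGroup.one_eq_mk]
        group
      · by_cases hc1 : d₀ = flipP p
        · -- head of D' cancels
          have hrot2 : Rot D' (T ++ [flipP p]) :=
            ⟨[d₀], T, by rw [hD'c]; rfl, by rw [hc1]⟩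
          have hcyc2 : CycRed (T ++ [flipP p]) := hrot2.cycRed hcyc
          refine ⟨[], T ++ [flipP p], hrot.trans hrot2, hcyc2, by simpa using hcyc2.isRed, ?_⟩
          rw [hexpr, ← mk_sandwich, hD'c, mk_cons d₀ T, hc1,
            ← FreeGroup.mul_mk (L₁ := T) (L₂ := [flipP p]), ← mk_inv_singleton]
          simp only [← FreeGroup.one_eq_mk]
          group
        · by_cases hc2 : D'.getLast? = some p
          · -- tail of D' cancels
            obtain ⟨T₂, hT₂⟩ : ∃ T₂, D' = T₂ ++ [p] := by
              have hne : D' ≠ [] := by rw [hD'c]; simp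
              refine ⟨D'.dropLast, ?_⟩
              rw [List.getLast?_eq_getLast hne] at hc2
              have h5 := List.dropLast_append_getLast hne
              rw [Option.some_inj.1 hc2] at h5
              exact h5.symm
            have hrot2 : Rot D' (p :: T₂) := ⟨T₂, [p], hT₂, rfl⟩
            have hcyc2 : CycRed (p :: T₂) := hrot2.cycRed hcyc
            refine ⟨[], p :: T₂, hrot.trans hrot2, hcyc2, by simpa using hcyc2.isRed, ?_⟩
            rw [hexpr, ← mk_sandwich, hT₂, ← FreeGroup.mul_mk (L₁ := T₂) (L₂ := [p]),
              mk_cons p T₂]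
            simp only [← FreeGroup.one_eq_mk]
            group
          · -- no cancellation, D' nonempty
            have hD'ne : D' ≠ [] := by rw [hD'c]; simp
            refine ⟨[p], D', hrot, hcyc, ?_, ?_⟩
            · -- IsRed ([p] ++ D' ++ invRev [p])
              rw [invRev_singleton]
              have hsh : ([p] ++ D' ++ [flipP p] : List (α × Bool)) =
                  (p :: D') ++ [flipP p] := by simp
              rw [hsh]
              refine List.isChain_append.2 ⟨List.isChain_cons.2 ⟨?_, hcyc.isRed⟩,
                List.isChain_singleton _, ?_⟩
              · intro y hy
                rw [hD'c] at hy
                simp only [List.head?_cons, Option.mem_some_iff] at hy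
                subst hy
                rw [R_iff]
                exact hc1
              · intro x hx y hy
                simp only [List.head?_cons, Option.mem_some_iff] at hy
                subst hy
                rw [hD'c] at hx
                rw [List.getLast?_cons_cons] at hx
                rw [R_iff]
                intro hcon
                have hxp : x = p := by
                  have := congrArg flipP hcon
                  simpa using this.symm
                subst hxp
                apply hc2
                rw [hD'c]
                exact Option.mem_def.1 hx
            · rw [hexpr, ← mk_sandwich]
              simp only [← FreeGroup.one_eq_mk]
              group
    · -- U = u₀ :: U₁
      by_cases hc : u₀ = flipP p
      · -- cancellation with head of U
        refine ⟨U₁, D', hrot, hcyc, ?_, ?_⟩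
        · refine hred.infix ⟨[u₀], [flipP u₀], ?_⟩
          rw [invRev_cons]
          simp [List.append_assoc]
        · rw [hexpr, ← mk_sandwich, mk_cons u₀ U₁, hc, ← mk_inv_singleton]
          group
      · -- no cancellation: prepend p
        refine ⟨p :: (u₀ :: U₁), D', hrot, hcyc, ?_, ?_⟩
        · rw [invRev_cons]
          have hgoal : ((p :: (u₀ :: U₁)) ++ D' ++ (invRev (u₀ :: U₁) ++ [flipP p])
                : List (α × Bool)) =
              p :: (((u₀ :: U₁) ++ D' ++ invRev (u₀ :: U₁)) ++ [flipP p]) := by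
            simp [List.append_assoc]
          rw [hgoal]
          refine List.isChain_cons.2 ⟨?_, ?_⟩
          · intro y hy
            have hinvne : ((u₀ :: U₁) ++ D' ++ invRev (u₀ :: U₁) ++ [flipP p] :
                List (α × Bool)).head? = some u₀ := by
              simp only [List.cons_append, List.head?_cons]
            rw [hinvne, Option.mem_some_iff] at hy
            subst hy
            rw [R_iff]
            exact hc
          · refine List.isChain_append.2 ⟨hred, List.isChain_singleton _, ?_⟩
            intro x hx y hy
            simp only [List.head?_cons, Option.mem_some_iff] at hy
            subst hy
            have hinvne : (invRev (u₀ :: U₁) : List (α × Bool)) ≠ [] := by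
              intro hcon
              have := congrArg List.length hcon
              simp [FreeGroup.invRev_length] at this
            rw [List.append_assoc, List.getLast?_append_of_ne_nil _ (by
                simp [hinvne]), List.getLast?_append_of_ne_nil _ hinvne,
              getLast?_invRev] at hx
            simp only [List.head?_cons, Option.map_some, Option.mem_some_iff] at hx
            subst hx
            rw [R_iff]
            simp only [flipP_flipP]
            intro hcon
            exact hc (by rw [hcon])
        · rw [hexpr, ← mk_sandwich, mk_cons p (u₀ :: U₁)]
          group

lemma conj_pow_toWord [DecidableEq α] {u : FreeGroup α} {D : List (α × Bool)}
    (hD : CycRed D) (hred : IsRed (u.toWord ++ D ++ invRev u.toWord)) {n : ℕ} (hn : 1 ≤ n) :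
    ((u * FreeGroup.mk D * u⁻¹) ^ n).toWord = u.toWord ++ pw D n ++ invRev u.toWord := by
  have h1 : (u * FreeGroup.mk D * u⁻¹) ^ n = u * FreeGroup.mk (pw D n) * u⁻¹ := by
    rw [conj_pow, mk_pw]
  rw [h1]
  have h2 : u * FreeGroup.mk (pw D n) * u⁻¹ =
      FreeGroup.mk (u.toWord ++ pw D n ++ invRev u.toWord) := by
    conv_lhs => rw [← FreeGroup.mk_toWord (x := u)]
    rw [mk_sandwich]
  rw [h2, toWord_mk_isRed (isRed_sandwich_pw hred hD hn)]

lemma norm_conj_pow [DecidableEq α] {u : FreeGroup α} {D : List (α × Bool)}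
    (hD : CycRed D) (hred : IsRed (u.toWord ++ D ++ invRev u.toWord)) {n : ℕ} (hn : 1 ≤ n) :
    FreeGroup.norm ((u * FreeGroup.mk D * u⁻¹) ^ n) =
      2 * u.toWord.length + n * D.length := by
  rw [FreeGroup.norm, conj_pow_toWord hD hred hn]
  simp [FreeGroup.invRev_length, length_pw]
  ring

/-- unique roots -/
lemma unique_roots [DecidableEq α] {x y : FreeGroup α} {n : ℕ} (hn : 1 ≤ n)
    (h : x ^ n = y ^ n) : x = y := by
  obtain ⟨u, D, hD, hxeq, hxw⟩ := cycDecomp x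
  have hredx : IsRed (u.toWord ++ D ++ invRev u.toWord) := by
    rw [← hxw]; exact isRed_toWord x
  -- y' := u⁻¹ * y * u
  set y' := u⁻¹ * y * u with hy'
  have hy'n : y' ^ n = FreeGroup.mk (pw D n) := by
    have : y' ^ n = u⁻¹ * y ^ n * u := by
      rw [hy', show u⁻¹ * y * u = u⁻¹ * y * (u⁻¹)⁻¹ by rw [inv_inv], conj_pow, inv_inv]
    rw [this, ← h, hxeq, conj_pow, mk_pw]
    group
  obtain ⟨v, E, hE, hyeq, hyw⟩ := cycDecomp y'
  have hredy : IsRed (v.toWord ++ E ++ invRev v.toWord) := by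
    rw [← hyw]; exact isRed_toWord y'
  have hy'n2 : (y' ^ n).toWord = v.toWord ++ pw E n ++ invRev v.toWord := by
    rw [hyeq]; exact conj_pow_toWord hE hredy hn
  have hy'n3 : (y' ^ n).toWord = pw D n := by
    rw [hy'n, toWord_mk_isRed (isRed_pw hD n)]
  have heql : v.toWord ++ pw E n ++ invRev v.toWord = pw D n := by
    rw [← hy'n2, hy'n3]
  have hVnil : v.toWord = [] := by
    refine nil_of_cycRed_sandwich (W := pw E n) ?_
    rw [heql]
    exact cycRed_pw hD n
  have hvone : v = 1 := by
    rw [← FreeGroup.mk_toWord (x := v), hVnil, ← FreeGroup.one_eq_mk]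
  have hED : pw E n = pw D n := by
    rw [hVnil] at heql
    simpa [FreeGroup.invRev_empty] using heql
  have hlen : E.length = D.length := by
    have := congrArg List.length hED
    rw [length_pw, length_pw] at this
    exact Nat.eq_of_mul_eq_mul_left (by omega) this
  have hEDeq : E = D := by
    obtain ⟨m, rfl⟩ := Nat.exists_eq_add_of_le hn
    rw [Nat.add_comm, pw_succ, pw_succ] at hED
    exact (List.append_inj hED hlen).1
  have hy'2 : y' = FreeGroup.mk D := by
    rw [hyeq, hvone, hEDeq]
    group
  rw [hy', hxeq] at *
  have : u⁻¹ * y * u = FreeGroup.mk D := hy'2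
  calc u * FreeGroup.mk D * u⁻¹ = u * (u⁻¹ * y * u) * u⁻¹ := by rw [this]
    _ = y := by group

/-- an element is never conjugate to its inverse (unless trivial) -/
lemma no_conj_inv [DecidableEq α] {b x : FreeGroup α} (h : b * x * b⁻¹ = x⁻¹) : x = 1 := by
  by_contra hx
  obtain ⟨u, D, hD, hxeq, hxw⟩ := cycDecomp x
  have hDne : D ≠ [] := by
    intro hnil
    apply hx
    rw [hxeq, hnil, ← FreeGroup.one_eq_mk]
    group
  set b' := u⁻¹ * b * u with hb'
  have hkey : b' * FreeGroup.mk D * b'⁻¹ = FreeGroup.mk (invRev D) := by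
    rw [← FreeGroup.inv_mk, hb']
    have hDx : FreeGroup.mk D = u⁻¹ * x * u := by rw [hxeq]; group
    rw [hDx]
    calc u⁻¹ * b * u * (u⁻¹ * x * u) * (u⁻¹ * b * u)⁻¹
        = u⁻¹ * (b * x * b⁻¹) * u := by group
      _ = u⁻¹ * x⁻¹ * u := by rw [h]
      _ = (u⁻¹ * x * u)⁻¹ := by group
  obtain ⟨U', D'', hrot, hcyc'', hred'', heq''⟩ := conjForm b'.toWord (isRed_toWord b') D hD
  rw [FreeGroup.mk_toWord] at heq''
  have heqw : invRev D = U' ++ D'' ++ invRev U' := by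
    have := heq''.symm.trans hkey
    have h2 := congrArg FreeGroup.toWord this
    rw [toWord_mk_isRed hred'', toWord_mk_isRed ((CycRed.isRed hD).invRev)] at h2
    exact h2.symm
  have hU'nil : U' = [] := by
    refine nil_of_cycRed_sandwich (W := D'') ?_
    rw [← heqw]
    exact hD.invRev
  rw [hU'nil] at heqw
  have heqw2 : invRev D = D'' := by simpa [FreeGroup.invRev_empty] using heqw
  obtain ⟨A, B, hAB, hBA⟩ := hrot
  have hinv : FreeGroup.invRev B ++ FreeGroup.invRev A = B ++ A := by
    rw [← invRev_append, ← hAB, heqw2, hBA]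
  have hlen : (FreeGroup.invRev B).length = B.length := FreeGroup.invRev_length
  have hpair := List.append_inj hinv hlen
  have hAred : IsRed A := hD.isRed.infix ⟨[], B, by simp [hAB]⟩
  have hBred : IsRed B := hD.isRed.infix ⟨A, [], by simp [hAB]⟩
  have hA : A = [] := eq_nil_of_invRev_eq hAred hpair.2
  have hB : B = [] := eq_nil_of_invRev_eq hBred hpair.1
  apply hDne
  rw [hAB, hA, hB]
  rfl

end FGCommAux

open FGCommAux in
/-- In a free group, if a conjugate of a nonzero power of `c` by `a` is again a nonzero
power of `c` (with `c ≠ 1`), then `a` commutes with `c`. -/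
theorem commute_of_conj_zpow_eq_zpow {α : Type*} (a c : FreeGroup α) (hc : c ≠ 1)
    (k l : ℤ) (hk : k ≠ 0) (hl : l ≠ 0)
    (h : a * c ^ k * a⁻¹ = c ^ l) :
    a * c = c * a := by
  classical
  obtain ⟨u, D, hD, hceq, hcw⟩ := cycDecomp c
  have hredc : IsRed (u.toWord ++ D ++ FreeGroup.invRev u.toWord) := by
    rw [← hcw]; exact isRed_toWord c
  have hDne : D ≠ [] := by
    intro hnil
    apply hc
    rw [hceq, hnil, ← FreeGroup.one_eq_mk]
    group
  have hg : 1 ≤ D.length := by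
    cases D with
    | nil => exact absurd rfl hDne
    | cons d T => simp
  set p := u.toWord.length with hp
  set g := D.length with hgdef
  have hnormn : ∀ n : ℕ, 1 ≤ n → FreeGroup.norm (c ^ n) = 2 * p + n * g := by
    intro n hn
    rw [hceq]
    exact norm_conj_pow hD hredc hn
  have hnormz : ∀ z : ℤ, z ≠ 0 → FreeGroup.norm (c ^ z) = 2 * p + z.natAbs * g := by
    intro z hz
    rcases Int.natAbs_eq z with hzz | hzz
    · rw [hzz, zpow_natCast]
      refine hnormn z.natAbs ?_
      have := Int.natAbs_pos.2 hz
      omega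
    · rw [hzz, zpow_neg, zpow_natCast, FreeGroup.norm_inv_eq]
      simp only [Int.natAbs_neg, Int.natAbs_natCast]
      refine hnormn z.natAbs ?_
      have := Int.natAbs_pos.2 hz
      omega
  have key : ∀ (b : FreeGroup α) (k' l' : ℤ), k' ≠ 0 → l' ≠ 0 →
      b * c ^ k' * b⁻¹ = c ^ l' → l'.natAbs ≤ k'.natAbs := by
    intro b k' l' hk' hl' hb
    by_contra hlt
    push_neg at hlt
    set A := FreeGroup.norm b with hA
    set m : ℕ := 2 * A + 1 with hm
    have hbm : c ^ (l' * (m : ℤ)) = b * c ^ (k' * (m : ℤ)) * b⁻¹ := by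
      calc c ^ (l' * (m : ℤ)) = (c ^ l') ^ (m : ℤ) := zpow_mul c l' (m : ℤ)
        _ = (b * c ^ k' * b⁻¹) ^ (m : ℤ) := by rw [hb]
        _ = b * (c ^ k') ^ (m : ℤ) * b⁻¹ := conj_zpow
        _ = b * c ^ (k' * (m : ℤ)) * b⁻¹ := by rw [← zpow_mul]
    have hineq : FreeGroup.norm (c ^ (l' * (m : ℤ))) ≤
        A + FreeGroup.norm (c ^ (k' * (m : ℤ))) + A := by
      rw [hbm]
      calc FreeGroup.norm (b * c ^ (k' * (m : ℤ)) * b⁻¹)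
          ≤ FreeGroup.norm (b * c ^ (k' * (m : ℤ))) + FreeGroup.norm b⁻¹ :=
            FreeGroup.norm_mul_le _ _
        _ ≤ A + FreeGroup.norm (c ^ (k' * (m : ℤ))) + A := by
            have h5 := FreeGroup.norm_mul_le b (c ^ (k' * (m : ℤ)))
            rw [FreeGroup.norm_inv_eq]
            omega
    have hmne : (m : ℤ) ≠ 0 := by positivity
    rw [hnormz _ (mul_ne_zero hl' hmne), hnormz _ (mul_ne_zero hk' hmne)] at hineq
    rw [Int.natAbs_mul, Int.natAbs_mul] at hineq
    simp only [Int.natAbs_natCast] at hineq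
    have e1 : (k'.natAbs + 1) * m * g ≤ l'.natAbs * m * g :=
      Nat.mul_le_mul_right _ (Nat.mul_le_mul_right _ (by omega))
    have e2 : m ≤ m * g := Nat.le_mul_of_pos_right m hg
    have e3 : (k'.natAbs + 1) * m * g = k'.natAbs * m * g + m * g := by ring
    have e4 : l'.natAbs * m * g = (l'.natAbs * m) * g := by ring
    have e5 : k'.natAbs * m * g = (k'.natAbs * m) * g := by ring
    omega
  have h1 := key a k l hk hl h
  have h2 : a⁻¹ * c ^ l * (a⁻¹)⁻¹ = c ^ k := by
    rw [inv_inv, ← h]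
    group
  have h2' := key a⁻¹ l k hl hk h2
  have habs : l.natAbs = k.natAbs := le_antisymm h1 h2'
  rcases Int.natAbs_eq_natAbs_iff.1 habs with hlk | hlk
  · -- l = k
    subst hlk
    set n := l.natAbs with hn
    have hn1 : 1 ≤ n := Int.natAbs_pos.2 hl
    have hck : a * c ^ (n : ℕ) * a⁻¹ = c ^ (n : ℕ) := by
      rcases Int.natAbs_eq l with he | he
      · rw [he, zpow_natCast] at h
        exact h
      · rw [he, zpow_neg, zpow_natCast] at h
        calc a * c ^ (n : ℕ) * a⁻¹ = (a * (c ^ (n : ℕ))⁻¹ * a⁻¹)⁻¹ := by group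
          _ = ((c ^ (n : ℕ))⁻¹)⁻¹ := by rw [h]
          _ = c ^ (n : ℕ) := inv_inv _
    have hb : (a * c * a⁻¹) ^ n = c ^ n := by rw [conj_pow, hck]
    have hfin := unique_roots hn1 hb
    calc a * c = (a * c * a⁻¹) * a := by group
      _ = c * a := by rw [hfin]
  · -- l = -k : impossible
    exfalso
    rw [hlk, zpow_neg] at h
    have hone := no_conj_inv h
    have h0 := hnormz k hk
    rw [hone, FreeGroup.norm_one] at h0
    have hka : 1 ≤ k.natAbs := Int.natAbs_pos.2 hk
    have : 1 * 1 ≤ k.natAbs * g := Nat.mul_le_mul hka hg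
    omega
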